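/- Let H be an n-vertex k-uniform hypergraph and e ∈ E(H) an edge. Then for each i, λ_{i+k-1}(H) ≤ λ_i(H - e) ≤ λ_{i-k+1}(H), with the conventions λ_j(H) = k/(k-1) for j < 1 and λ_j(H) = 0 for j > n. -/

import Mathlib

open Finset Matrix

variable {n : ℕ}

def hdeg (E : Finset (Finset (Fin n))) (v : Fin n) : ℕ :=
  (E.filter fun e => v ∈ e).card

def codeg (E : Finset (Finset (Fin n))) (u v : Fin n) : ℕ :=
  (E.filter fun e => u ∈ e ∧ v ∈ e).card

noncomputable def adjMat (E : Finset (Finset (Fin n))) : Matrix (Fin n) (Fin n) ℝ :=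
  fun u v => if u = v then 0
    else ∑ e ∈ E.filter (fun e => u ∈ e ∧ v ∈ e), (1 : ℝ) / ((e.card : ℝ) - 1)

noncomputable def lapMat (E : Finset (Finset (Fin n))) : Matrix (Fin n) (Fin n) ℝ :=
  Matrix.diagonal (fun v => (hdeg E v : ℝ)) - adjMat E

noncomputable def normLap (E : Finset (Finset (Fin n))) : Matrix (Fin n) (Fin n) ℝ :=
  Matrix.diagonal (fun v => (hdeg E v : ℝ) ^ (-(1/2) : ℝ)) * lapMat E *
    Matrix.diagonal (fun v => (hdeg E v : ℝ) ^ (-(1/2) : ℝ))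

noncomputable def eigsAsc (M : Matrix (Fin n) (Fin n) ℝ) : Fin n → ℝ :=
  if h : M.IsHermitian then (h.eigenvalues ∘ Tuple.sort h.eigenvalues) else 0

noncomputable def lamConv {n : ℕ} (k : ℕ) (M : Matrix (Fin n) (Fin n) ℝ) (j : ℤ) : ℝ :=
  if h1 : j < 1 then (k : ℝ) / ((k : ℝ) - 1)
  else if h2 : j ≤ (n : ℤ) then eigsAsc M ⟨n - j.toNat, by omega⟩ else 0

noncomputable def S2 (E : Finset (Finset (Fin n))) (x : Fin n → ℝ) : ℝ :=
  ∑ f ∈ E, ∑ v ∈ f, x v ^ 2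

noncomputable def S1 (E : Finset (Finset (Fin n))) (x : Fin n → ℝ) : ℝ :=
  ∑ f ∈ E, (∑ v ∈ f, x v) ^ 2

noncomputable def BM (E : Finset (Finset (Fin n))) : Matrix (Fin n) (Fin n) ℝ :=
  Matrix.of fun u v => ∑ f ∈ E, (if u ∈ f then (1:ℝ) else 0) * (if v ∈ f then (1:ℝ) else 0)

lemma ite_sum_helper (f : Finset (Fin n)) (g : Fin n → ℝ) :
    ∑ v, (if v ∈ f then (1:ℝ) else 0) * g v = ∑ v ∈ f, g v := by
  simp only [ite_mul, one_mul, zero_mul, Finset.sum_ite_mem, Finset.univ_inter]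

lemma hdeg_cast (E : Finset (Finset (Fin n))) (v : Fin n) :
    (hdeg E v : ℝ) = ∑ f ∈ E, (if v ∈ f then (1:ℝ) else 0) := by
  rw [hdeg, Finset.card_filter]
  push_cast
  rfl

lemma quad_diag_deg (E : Finset (Finset (Fin n))) (x : Fin n → ℝ) :
    x ⬝ᵥ (Matrix.diagonal fun v => (hdeg E v : ℝ)) *ᵥ x = S2 E x := by
  unfold dotProduct S2
  simp only [Matrix.mulVec_diagonal, hdeg_cast, Finset.sum_mul, Finset.mul_sum]
  rw [Finset.sum_comm]
  refine Finset.sum_congr rfl (fun f _ => ?_)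
  have h1 : ∀ v : Fin n, x v * ((if v ∈ f then (1:ℝ) else 0) * x v)
      = (if v ∈ f then (1:ℝ) else 0) * x v ^ 2 := fun v => by ring
  rw [Finset.sum_congr rfl (fun v _ => h1 v), ite_sum_helper]

lemma quad_B (E : Finset (Finset (Fin n))) (x : Fin n → ℝ) :
    x ⬝ᵥ (BM E) *ᵥ x = S1 E x := by
  have step : ∀ u, (BM E *ᵥ x) u
      = ∑ f ∈ E, (if u ∈ f then (1:ℝ) else 0) * ∑ v ∈ f, x v := by
    intro u
    show ∑ v, (∑ f ∈ E, (if u ∈ f then (1:ℝ) else 0) * (if v ∈ f then (1:ℝ) else 0)) * x v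
      = _
    simp only [Finset.sum_mul]
    rw [Finset.sum_comm]
    refine Finset.sum_congr rfl (fun f _ => ?_)
    have h1 : ∀ v : Fin n, (if u ∈ f then (1:ℝ) else 0) * (if v ∈ f then (1:ℝ) else 0) * x v
        = (if u ∈ f then (1:ℝ) else 0) * ((if v ∈ f then (1:ℝ) else 0) * x v) := fun v => by ring
    rw [Finset.sum_congr rfl (fun v _ => h1 v), ← Finset.mul_sum, ite_sum_helper]
  show ∑ u, x u * (BM E *ᵥ x) u = _
  simp only [step]
  rw [Finset.sum_congr rfl (fun u (_ : u ∈ Finset.univ) => Finset.mul_sum (a := x u)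
    (s := E) (f := fun f => (if u ∈ f then (1:ℝ) else 0) * ∑ v ∈ f, x v)), Finset.sum_comm]
  unfold S1
  refine Finset.sum_congr rfl (fun f _ => ?_)
  have h1 : ∀ u : Fin n, x u * ((if u ∈ f then (1:ℝ) else 0) * ∑ v ∈ f, x v)
      = (if u ∈ f then (1:ℝ) else 0) * (x u * ∑ v ∈ f, x v) := fun u => by ring
  rw [Finset.sum_congr rfl (fun u _ => h1 u), ite_sum_helper, ← Finset.sum_mul, pow_two]

lemma adj_eq (E : Finset (Finset (Fin n))) {k : ℕ} (hk : 2 ≤ k)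
    (hunif : ∀ f ∈ E, f.card = k) :
    adjMat E = (((k:ℝ)-1)⁻¹) • (BM E - Matrix.diagonal (fun v => (hdeg E v : ℝ))) := by
  ext u v
  by_cases huv : u = v
  · subst huv
    have h1 : BM E u u = (hdeg E u : ℝ) := by
      show (∑ f ∈ E, (if u ∈ f then (1:ℝ) else 0) * (if u ∈ f then (1:ℝ) else 0)) = _
      rw [hdeg_cast]
      exact Finset.sum_congr rfl (fun f _ => by by_cases h : u ∈ f <;> simp [h])
    rw [Matrix.smul_apply, Matrix.sub_apply, Matrix.diagonal_apply_eq, h1]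
    simp [adjMat]
  · simp only [adjMat, if_neg huv, Matrix.smul_apply, Matrix.sub_apply, BM, Matrix.of_apply,
      Matrix.diagonal_apply_ne _ huv, sub_zero, smul_eq_mul]
    rw [Finset.sum_filter, Finset.mul_sum]
    refine Finset.sum_congr rfl (fun f hf => ?_)
    by_cases h : u ∈ f ∧ v ∈ f
    · rw [if_pos h, if_pos h.1, if_pos h.2, hunif f hf]
      simp
    · rw [if_neg h]
      rcases not_and_or.mp h with h' | h'
      · simp [h']
      · simp [h']

lemma quad_lap (E : Finset (Finset (Fin n))) {k : ℕ} (hk : 2 ≤ k)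
    (hunif : ∀ f ∈ E, f.card = k) (x : Fin n → ℝ) :
    x ⬝ᵥ lapMat E *ᵥ x = S2 E x + (((k:ℝ)-1)⁻¹) * (S2 E x - S1 E x) := by
  unfold lapMat
  rw [adj_eq E hk hunif]
  rw [Matrix.sub_mulVec, dotProduct_sub, quad_diag_deg]
  rw [Matrix.smul_mulVec, dotProduct_smul, Matrix.sub_mulVec,
    dotProduct_sub, quad_B, quad_diag_deg]
  simp only [smul_eq_mul]
  ring

-- ### basic inequalities and decompositions

lemma S2_nonneg (E : Finset (Finset (Fin n))) (x : Fin n → ℝ) : 0 ≤ S2 E x :=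
  Finset.sum_nonneg fun f _ => Finset.sum_nonneg fun v _ => sq_nonneg _

lemma S1_nonneg (E : Finset (Finset (Fin n))) (x : Fin n → ℝ) : 0 ≤ S1 E x :=
  Finset.sum_nonneg fun f _ => sq_nonneg _

lemma S1_le (E : Finset (Finset (Fin n))) {k : ℕ}
    (hunif : ∀ f ∈ E, f.card = k) (x : Fin n → ℝ) : S1 E x ≤ (k:ℝ) * S2 E x := by
  unfold S1 S2
  rw [Finset.mul_sum]
  refine Finset.sum_le_sum fun f hf => ?_
  have := sq_sum_le_card_mul_sum_sq (s := f) (f := x)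
  rwa [hunif f hf] at this

lemma quad_lap_nonneg (E : Finset (Finset (Fin n))) {k : ℕ} (hk : 2 ≤ k)
    (hunif : ∀ f ∈ E, f.card = k) (x : Fin n → ℝ) :
    0 ≤ x ⬝ᵥ lapMat E *ᵥ x := by
  rw [quad_lap E hk hunif]
  have hk1 : (1:ℝ) ≤ (k:ℝ) - 1 := by
    have : (2:ℝ) ≤ (k:ℝ) := by exact_mod_cast hk
    linarith
  have h1 := S1_le E hunif x
  have h2 := S2_nonneg E x
  have h3 : (0:ℝ) < (k:ℝ) - 1 := by linarith
  have hcpos : (0:ℝ) < ((k:ℝ)-1)⁻¹ := by positivity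
  have key : ((k:ℝ)-1)⁻¹ * (S2 E x - (k:ℝ) * S2 E x) ≤ ((k:ℝ)-1)⁻¹ * (S2 E x - S1 E x) :=
    mul_le_mul_of_nonneg_left (by linarith) hcpos.le
  have h4 : ((k:ℝ)-1)⁻¹ * (S2 E x - (k:ℝ) * S2 E x) = - S2 E x := by
    field_simp
    ring
  linarith

lemma quad_lap_le (E : Finset (Finset (Fin n))) {k : ℕ} (hk : 2 ≤ k)
    (hunif : ∀ f ∈ E, f.card = k) (x : Fin n → ℝ) :
    x ⬝ᵥ lapMat E *ᵥ x ≤ ((k:ℝ)/((k:ℝ)-1)) * S2 E x := by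
  rw [quad_lap E hk hunif]
  have h3 : (0:ℝ) < (k:ℝ) - 1 := by
    have : (2:ℝ) ≤ (k:ℝ) := by exact_mod_cast hk
    linarith
  have h1 := S1_nonneg E x
  have expand : ((k:ℝ)/((k:ℝ)-1)) * S2 E x
      = S2 E x + ((k:ℝ)-1)⁻¹ * (S2 E x - 0) := by
    field_simp
    ring
  rw [expand]
  have : ((k:ℝ)-1)⁻¹ * (S2 E x - S1 E x) ≤ ((k:ℝ)-1)⁻¹ * (S2 E x - 0) := by
    apply mul_le_mul_of_nonneg_left _ (by positivity)
    linarith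
  linarith

lemma S2_erase (E : Finset (Finset (Fin n))) {e : Finset (Fin n)} (he : e ∈ E) (x : Fin n → ℝ) :
    S2 E x = S2 (E.erase e) x + ∑ v ∈ e, x v ^ 2 := by
  unfold S2
  rw [← Finset.sum_erase_add E _ he]

lemma S1_erase (E : Finset (Finset (Fin n))) {e : Finset (Fin n)} (he : e ∈ E) (x : Fin n → ℝ) :
    S1 E x = S1 (E.erase e) x + (∑ v ∈ e, x v) ^ 2 := by
  unfold S1
  rw [← Finset.sum_erase_add E _ he]

lemma hdeg_ne_zero (E : Finset (Finset (Fin n))) {f : Finset (Fin n)} (hf : f ∈ E)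
    {v : Fin n} (hv : v ∈ f) : hdeg E v ≠ 0 :=
  Finset.card_ne_zero_of_mem (Finset.mem_filter.mpr ⟨hf, hv⟩)

lemma hdeg_erase_le (E : Finset (Finset (Fin n))) (e : Finset (Fin n)) (v : Fin n) :
    hdeg (E.erase e) v ≤ hdeg E v :=
  Finset.card_le_card (Finset.filter_subset_filter _ (Finset.erase_subset _ _))

lemma S2_congr (E : Finset (Finset (Fin n))) {x x' : Fin n → ℝ}
    (h : ∀ v, hdeg E v ≠ 0 → x v = x' v) : S2 E x = S2 E x' := by
  unfold S2
  refine Finset.sum_congr rfl fun f hf => Finset.sum_congr rfl fun v hv => ?_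
  rw [h v (hdeg_ne_zero E hf hv)]

lemma S1_congr (E : Finset (Finset (Fin n))) {x x' : Fin n → ℝ}
    (h : ∀ v, hdeg E v ≠ 0 → x v = x' v) : S1 E x = S1 E x' := by
  unfold S1
  refine Finset.sum_congr rfl fun f hf => ?_
  rw [Finset.sum_congr rfl fun v hv => h v (hdeg_ne_zero E hf hv)]

-- ### rpow facts

lemma rpow_mh_ph (a : ℕ) :
    (a:ℝ) ^ ((1/2):ℝ) * (a:ℝ) ^ (-(1/2):ℝ) = if a = 0 then 0 else 1 := by
  rcases Nat.eq_zero_or_pos a with h | h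
  · subst h
    rw [if_pos rfl]
    push_cast
    rw [Real.zero_rpow (by norm_num), zero_mul]
  · rw [if_neg (by omega)]
    have ha : (0:ℝ) < (a:ℝ) := by exact_mod_cast h
    rw [← Real.rpow_add ha]
    norm_num

lemma rpow_ph_sq (a : ℕ) :
    (a:ℝ) ^ ((1/2):ℝ) * (a:ℝ) ^ ((1/2):ℝ) = (a:ℝ) := by
  rcases Nat.eq_zero_or_pos a with h | h
  · subst h
    push_cast
    rw [Real.zero_rpow (by norm_num), zero_mul]
  · have ha : (0:ℝ) < (a:ℝ) := by exact_mod_cast h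
    rw [← Real.rpow_add ha]
    norm_num

lemma rpow_mh_sq_mul (a : ℕ) :
    (a:ℝ) * ((a:ℝ) ^ (-(1/2):ℝ) * (a:ℝ) ^ (-(1/2):ℝ)) = if a = 0 then 0 else 1 := by
  rcases Nat.eq_zero_or_pos a with h | h
  · subst h
    rw [if_pos rfl]
    push_cast
    ring
  · rw [if_neg (by omega)]
    have ha : (0:ℝ) < (a:ℝ) := by exact_mod_cast h
    rw [← Real.rpow_add ha]
    norm_num
    rw [show (-1:ℝ) = ((-1:ℤ):ℝ) by norm_num, Real.rpow_intCast]
    field_simp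

-- ### diagonal conjugation

noncomputable def dmh (E : Finset (Finset (Fin n))) : Matrix (Fin n) (Fin n) ℝ :=
  Matrix.diagonal (fun v => (hdeg E v : ℝ) ^ (-(1/2) : ℝ))

noncomputable def dph (E : Finset (Finset (Fin n))) : Matrix (Fin n) (Fin n) ℝ :=
  Matrix.diagonal (fun v => (hdeg E v : ℝ) ^ ((1/2) : ℝ))

lemma dot_diag_left (d : Fin n → ℝ) (y w : Fin n → ℝ) :
    y ⬝ᵥ (Matrix.diagonal d) *ᵥ w = ((Matrix.diagonal d) *ᵥ y) ⬝ᵥ w := by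
  unfold dotProduct
  refine Finset.sum_congr rfl fun v _ => ?_
  simp [Matrix.mulVec_diagonal]
  ring

lemma normLap_eq (E : Finset (Finset (Fin n))) : normLap E = dmh E * lapMat E * dmh E := rfl

lemma quad_normLap (E : Finset (Finset (Fin n))) (y : Fin n → ℝ) :
    y ⬝ᵥ normLap E *ᵥ y = (dmh E *ᵥ y) ⬝ᵥ lapMat E *ᵥ (dmh E *ᵥ y) := by
  rw [normLap_eq, ← Matrix.mulVec_mulVec, ← Matrix.mulVec_mulVec]
  exact dot_diag_left _ _ _

lemma dph_dmh_apply (E : Finset (Finset (Fin n))) (y : Fin n → ℝ) (v : Fin n) :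
    (dph E *ᵥ (dmh E *ᵥ y)) v = if hdeg E v = 0 then 0 else y v := by
  unfold dph dmh
  simp only [Matrix.mulVec_diagonal]
  rw [← mul_assoc, rpow_mh_ph]
  by_cases h : hdeg E v = 0 <;> simp [h]

lemma dmh_dph_apply (E : Finset (Finset (Fin n))) (x : Fin n → ℝ) (v : Fin n) :
    (dmh E *ᵥ (dph E *ᵥ x)) v = if hdeg E v = 0 then 0 else x v := by
  unfold dph dmh
  simp only [Matrix.mulVec_diagonal]
  rw [← mul_assoc, mul_comm ((hdeg E v : ℝ) ^ (-(1/2):ℝ)), rpow_mh_ph]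
  by_cases h : hdeg E v = 0 <;> simp [h]

lemma dph_dot_self (E : Finset (Finset (Fin n))) (x : Fin n → ℝ) :
    (dph E *ᵥ x) ⬝ᵥ (dph E *ᵥ x) = x ⬝ᵥ (Matrix.diagonal fun v => (hdeg E v : ℝ)) *ᵥ x := by
  unfold dotProduct
  refine Finset.sum_congr rfl fun v _ => ?_
  simp only [dph, Matrix.mulVec_diagonal]
  rw [show (hdeg E v : ℝ) ^ ((1/2):ℝ) * x v * ((hdeg E v : ℝ) ^ ((1/2):ℝ) * x v)
      = ((hdeg E v : ℝ) ^ ((1/2):ℝ) * (hdeg E v : ℝ) ^ ((1/2):ℝ)) * (x v * x v) by ring,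
    rpow_ph_sq]
  ring

lemma dmh_deg_le (E : Finset (Finset (Fin n))) (y : Fin n → ℝ) :
    (dmh E *ᵥ y) ⬝ᵥ (Matrix.diagonal fun v => (hdeg E v : ℝ)) *ᵥ (dmh E *ᵥ y) ≤ y ⬝ᵥ y := by
  unfold dotProduct
  refine Finset.sum_le_sum fun v _ => ?_
  simp only [dmh, Matrix.mulVec_diagonal]
  rw [show (hdeg E v : ℝ) ^ (-(1/2):ℝ) * y v
        * ((hdeg E v : ℝ) * ((hdeg E v : ℝ) ^ (-(1/2):ℝ) * y v))
      = ((hdeg E v : ℝ) * ((hdeg E v : ℝ) ^ (-(1/2):ℝ) * (hdeg E v : ℝ) ^ (-(1/2):ℝ)))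
        * (y v * y v) by ring, rpow_mh_sq_mul]
  by_cases h : hdeg E v = 0
  · rw [if_pos h, zero_mul]
    exact mul_self_nonneg _
  · rw [if_neg h, one_mul]

lemma isHermitian_normLap (E : Finset (Finset (Fin n))) : (normLap E).IsHermitian := by
  have hA : (adjMat E).IsHermitian := by
    ext u v
    simp only [Matrix.conjTranspose_apply, adjMat, star_trivial]
    by_cases huv : v = u
    · subst huv
      rfl
    · rw [if_neg huv, if_neg (fun h => huv h.symm)]
      apply Finset.sum_congr _ (fun f _ => rfl)
      ext f
      simp only [Finset.mem_filter]
      tauto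
  have hD : (Matrix.diagonal fun v => (hdeg E v : ℝ)).IsHermitian := Matrix.isHermitian_diagonal _
  have hL : (lapMat E).IsHermitian := hD.sub hA
  have := Matrix.isHermitian_mul_mul_conjTranspose (dmh E) hL
  rwa [show (dmh E)ᴴ = dmh E from Matrix.isHermitian_diagonal _] at this

lemma quad_normLap_nonneg (E : Finset (Finset (Fin n))) {k : ℕ} (hk : 2 ≤ k)
    (hunif : ∀ f ∈ E, f.card = k) (y : Fin n → ℝ) :
    0 ≤ y ⬝ᵥ normLap E *ᵥ y := by
  rw [quad_normLap]
  exact quad_lap_nonneg E hk hunif _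

lemma quad_normLap_le (E : Finset (Finset (Fin n))) {k : ℕ} (hk : 2 ≤ k)
    (hunif : ∀ f ∈ E, f.card = k) (y : Fin n → ℝ) :
    y ⬝ᵥ normLap E *ᵥ y ≤ ((k:ℝ)/((k:ℝ)-1)) * (y ⬝ᵥ y) := by
  rw [quad_normLap]
  refine le_trans (quad_lap_le E hk hunif _) ?_
  have hρ : (0:ℝ) ≤ (k:ℝ)/((k:ℝ)-1) := by
    have h2 : (2:ℝ) ≤ (k:ℝ) := by exact_mod_cast hk
    apply div_nonneg <;> linarith
  apply mul_le_mul_of_nonneg_left _ hρ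
  rw [← quad_diag_deg]
  exact dmh_deg_le E y

-- ### spectral machinery

lemma sum_dot {ι : Type*} {N : ℕ} (s : Finset ι) (g : ι → Fin N → ℝ) (z : Fin N → ℝ) :
    (∑ p ∈ s, g p) ⬝ᵥ z = ∑ p ∈ s, g p ⬝ᵥ z := by
  unfold dotProduct
  rw [Finset.sum_comm]
  refine Finset.sum_congr rfl fun i _ => ?_
  rw [Finset.sum_apply, Finset.sum_mul]

lemma dot_sum {ι : Type*} {N : ℕ} (s : Finset ι) (z : Fin N → ℝ) (g : ι → Fin N → ℝ) :
    z ⬝ᵥ (∑ p ∈ s, g p) = ∑ p ∈ s, z ⬝ᵥ g p := by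
  unfold dotProduct
  rw [Finset.sum_comm]
  refine Finset.sum_congr rfl fun i _ => ?_
  rw [Finset.sum_apply, Finset.mul_sum]

lemma dot_self_pos {N : ℕ} {y : Fin N → ℝ} (hy : y ≠ 0) : 0 < y ⬝ᵥ y := by
  have h1 : 0 ≤ y ⬝ᵥ y := Finset.sum_nonneg fun i _ => mul_self_nonneg _
  exact h1.lt_of_ne fun h => hy (dotProduct_self_eq_zero.mp h.symm)

noncomputable def evec {N : ℕ} {M : Matrix (Fin N) (Fin N) ℝ} (hM : M.IsHermitian)
    (j : Fin N) : Fin N → ℝ :=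
  (WithLp.equiv 2 (Fin N → ℝ)) (hM.eigenvectorBasis (Tuple.sort hM.eigenvalues j))

lemma inner_eq_dot {N : ℕ} (a b : EuclideanSpace ℝ (Fin N)) :
    (inner ℝ a b : ℝ) = (WithLp.equiv 2 (Fin N → ℝ) a) ⬝ᵥ (WithLp.equiv 2 (Fin N → ℝ) b) := by
  simp [PiLp.inner_apply, RCLike.inner_apply, dotProduct, mul_comm]

lemma evec_dot {N : ℕ} {M : Matrix (Fin N) (Fin N) ℝ} (hM : M.IsHermitian) (j l : Fin N) :
    evec hM j ⬝ᵥ evec hM l = if j = l then 1 else 0 := by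
  have h0 := hM.eigenvectorBasis.orthonormal
  rw [orthonormal_iff_ite] at h0
  have h2 := h0 (Tuple.sort hM.eigenvalues j) (Tuple.sort hM.eigenvalues l)
  rw [inner_eq_dot] at h2
  unfold evec
  by_cases h : j = l
  · subst h
    simpa using h2
  · rw [if_neg h]
    rw [if_neg (fun hh => h ((Tuple.sort hM.eigenvalues).injective hh))] at h2
    exact_mod_cast h2

lemma evec_eigen {N : ℕ} {M : Matrix (Fin N) (Fin N) ℝ} (hM : M.IsHermitian) (j : Fin N) :
    M *ᵥ evec hM j = eigsAsc M j • evec hM j := by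
  have h := hM.mulVec_eigenvectorBasis (Tuple.sort hM.eigenvalues j)
  unfold eigsAsc
  rw [dif_pos hM]
  exact h

lemma eigsAsc_mono {N : ℕ} {M : Matrix (Fin N) (Fin N) ℝ} (hM : M.IsHermitian) :
    Monotone (eigsAsc M) := by
  unfold eigsAsc
  rw [dif_pos hM]
  exact Tuple.monotone_sort _

lemma li_of_dot {N m : ℕ} (w : Fin m → Fin N → ℝ)
    (hw : ∀ j l, w j ⬝ᵥ w l = if j = l then 1 else 0) : LinearIndependent ℝ w := by
  rw [Fintype.linearIndependent_iff]
  intro c hc j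
  have h := congrArg (fun y => w j ⬝ᵥ y) hc
  simp only [dot_sum, dotProduct_smul, hw, smul_eq_mul, mul_ite, mul_one, mul_zero,
    dotProduct_zero, Finset.sum_ite_eq, Finset.sum_ite_eq, Finset.sum_ite_eq', Finset.mem_univ, if_pos] at h
  exact h

lemma dot_span_eval {N m : ℕ} (w : Fin m → Fin N → ℝ)
    (hw : ∀ j l, w j ⬝ᵥ w l = if j = l then 1 else 0) (c : Fin m → ℝ) :
    (∑ p, c p • w p) ⬝ᵥ (∑ p, c p • w p) = ∑ p, c p ^ 2 := by
  rw [sum_dot]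
  refine Finset.sum_congr rfl fun p _ => ?_
  rw [smul_dotProduct, dot_sum]
  simp only [dotProduct_smul, hw, smul_eq_mul, mul_ite, mul_one, mul_zero,
    Finset.sum_ite_eq, Finset.sum_ite_eq', Finset.mem_univ, if_pos]
  ring

lemma quad_span_eval {N m : ℕ} (M : Matrix (Fin N) (Fin N) ℝ) (w : Fin m → Fin N → ℝ)
    (μw : Fin m → ℝ)
    (hw : ∀ j l, w j ⬝ᵥ w l = if j = l then 1 else 0)
    (heig : ∀ j, M *ᵥ w j = μw j • w j) (c : Fin m → ℝ) :
    (∑ p, c p • w p) ⬝ᵥ M *ᵥ (∑ p, c p • w p) = ∑ p, μw p * c p ^ 2 := by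
  have hmv : M *ᵥ (∑ p, c p • w p) = ∑ p, (c p * μw p) • w p := by
    show M.mulVecLin _ = _
    rw [map_sum]
    refine Finset.sum_congr rfl fun p _ => ?_
    rw [_root_.map_smul, Matrix.mulVecLin_apply, heig, smul_smul]
  rw [hmv, sum_dot]
  refine Finset.sum_congr rfl fun p _ => ?_
  rw [smul_dotProduct, dot_sum]
  simp only [dotProduct_smul, hw, smul_eq_mul, mul_ite, mul_one, mul_zero,
    Finset.sum_ite_eq, Finset.sum_ite_eq', Finset.mem_univ, if_pos]
  ring

lemma eigsAsc_bounds {N : ℕ} {M : Matrix (Fin N) (Fin N) ℝ} (hM : M.IsHermitian) {lo hi : ℝ}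
    (hlo : ∀ y : Fin N → ℝ, lo * (y ⬝ᵥ y) ≤ y ⬝ᵥ M *ᵥ y)
    (hhi : ∀ y : Fin N → ℝ, y ⬝ᵥ M *ᵥ y ≤ hi * (y ⬝ᵥ y)) (j : Fin N) :
    lo ≤ eigsAsc M j ∧ eigsAsc M j ≤ hi := by
  have h1 : evec hM j ⬝ᵥ evec hM j = 1 := by simpa using evec_dot hM j j
  have h2 : evec hM j ⬝ᵥ M *ᵥ evec hM j = eigsAsc M j := by
    rw [evec_eigen, dotProduct_smul, smul_eq_mul, h1, mul_one]
  constructor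
  · have := hlo (evec hM j)
    rwa [h1, mul_one, h2] at this
  · have := hhi (evec hM j)
    rwa [h1, mul_one, h2] at this

lemma cf_low {N : ℕ} {M : Matrix (Fin N) (Fin N) ℝ} (hM : M.IsHermitian)
    (m : ℕ) (hm1 : 1 ≤ m) (hmn : m ≤ N)
    (V : Submodule ℝ (Fin N → ℝ)) (hdim : m ≤ Module.finrank ℝ V)
    {c : ℝ} (hc : ∀ y ∈ V, c * (y ⬝ᵥ y) ≤ y ⬝ᵥ M *ᵥ y) :
    c ≤ eigsAsc M ⟨N - m, by omega⟩ := by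
  set w : Fin (N - m + 1) → (Fin N → ℝ) :=
    fun p => evec hM ⟨p.val, by omega⟩ with hw_def
  have hwdot : ∀ j l, w j ⬝ᵥ w l = if j = l then 1 else 0 := by
    intro j l
    rw [hw_def]
    simp only []
    rw [evec_dot]
    by_cases h : j = l
    · simp [h]
    · rw [if_neg h, if_neg]
      intro hh
      exact h (Fin.ext (by simpa using congrArg Fin.val hh))
  have hli := li_of_dot w hwdot
  set W := Submodule.span ℝ (Set.range w) with hW_def
  have hWrank : Module.finrank ℝ W = N - m + 1 := by
    rw [hW_def, finrank_span_eq_card hli, Fintype.card_fin]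
  have hsum := Submodule.finrank_sup_add_finrank_inf_eq V W
  have htot : Module.finrank ℝ ↥(V ⊔ W) ≤ N :=
    le_trans (Submodule.finrank_le _) (le_of_eq (Module.finrank_fin_fun ℝ))
  have hpos : 0 < Module.finrank ℝ ↥(V ⊓ W) := by omega
  have hnebot : (V ⊓ W : Submodule ℝ (Fin N → ℝ)) ≠ ⊥ := by
    intro h
    rw [h, finrank_bot] at hpos
    omega
  obtain ⟨y, hyVW, hy0⟩ := Submodule.ne_bot_iff _ |>.mp hnebot
  have hyV : y ∈ V := hyVW.1
  have hyW : y ∈ W := hyVW.2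
  obtain ⟨co, hco⟩ := (Submodule.mem_span_range_iff_exists_fun ℝ).mp hyW
  have hq := quad_span_eval M w (fun p => eigsAsc M ⟨p.val, by omega⟩) hwdot
    (fun j => evec_eigen hM _) co
  have hd := dot_span_eval w hwdot co
  rw [hco] at hq hd
  have hub : y ⬝ᵥ M *ᵥ y ≤ eigsAsc M ⟨N - m, by omega⟩ * (y ⬝ᵥ y) := by
    rw [hq, hd, Finset.mul_sum]
    refine Finset.sum_le_sum fun p _ => ?_
    apply mul_le_mul_of_nonneg_right _ (sq_nonneg _)
    apply eigsAsc_mono hM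
    exact Fin.mk_le_mk.mpr (by omega)
  have hlb := hc y hyV
  have hypos := dot_self_pos hy0
  exact le_of_mul_le_mul_right (le_trans hlb hub) hypos

lemma span_top {N : ℕ} {M : Matrix (Fin N) (Fin N) ℝ} (hM : M.IsHermitian)
    (r : ℕ) (hr1 : 1 ≤ r) (hr : r ≤ N) :
    ∃ V : Submodule ℝ (Fin N → ℝ), Module.finrank ℝ V = r ∧
      ∀ y ∈ V, (eigsAsc M ⟨N - r, by omega⟩) * (y ⬝ᵥ y) ≤ y ⬝ᵥ M *ᵥ y := by
  set w : Fin r → (Fin N → ℝ) :=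
    fun p => evec hM ⟨N - r + p.val, by omega⟩ with hw_def
  have hwdot : ∀ j l, w j ⬝ᵥ w l = if j = l then 1 else 0 := by
    intro j l
    rw [hw_def]
    simp only []
    rw [evec_dot]
    by_cases h : j = l
    · simp [h]
    · rw [if_neg h, if_neg]
      intro hh
      have := congrArg Fin.val hh
      simp only [] at this
      exact h (Fin.ext (by omega))
  have hli := li_of_dot w hwdot
  refine ⟨Submodule.span ℝ (Set.range w), ?_, ?_⟩
  · rw [finrank_span_eq_card hli, Fintype.card_fin]
  · intro y hy
    obtain ⟨co, hco⟩ := (Submodule.mem_span_range_iff_exists_fun ℝ).mp hy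
    have hq := quad_span_eval M w (fun p => eigsAsc M ⟨N - r + p.val, by omega⟩) hwdot
      (fun j => evec_eigen hM _) co
    have hd := dot_span_eval w hwdot co
    rw [hco] at hq hd
    rw [hq, hd, Finset.mul_sum]
    refine Finset.sum_le_sum fun p _ => ?_
    apply mul_le_mul_of_nonneg_right _ (sq_nonneg _)
    apply eigsAsc_mono hM
    exact Fin.mk_le_mk.mpr (by omega)

-- ### dimension helpers

lemma finrank_map_of_inj {N : ℕ} (T : (Fin N → ℝ) →ₗ[ℝ] (Fin N → ℝ))
    (X : Submodule ℝ (Fin N → ℝ)) (hinj : ∀ x ∈ X, T x = 0 → x = 0) :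
    Module.finrank ℝ ↥(X.map T) = Module.finrank ℝ ↥X := by
  have h1 := LinearMap.finrank_range_add_finrank_ker (T.domRestrict X)
  have h2 : LinearMap.ker (T.domRestrict X) = ⊥ := by
    rw [LinearMap.ker_eq_bot']
    rintro ⟨x, hx⟩ hx0
    exact Subtype.ext (hinj x hx hx0)
  have h3 : LinearMap.range (T.domRestrict X) = X.map T := LinearMap.range_domRestrict X T
  rw [h3, h2, finrank_bot] at h1
  omega

lemma finrank_inf_ker {N : ℕ} {W : Type*} [AddCommGroup W] [Module ℝ W]
    [FiniteDimensional ℝ W] (X : Submodule ℝ (Fin N → ℝ)) (φ : (Fin N → ℝ) →ₗ[ℝ] W) :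
    Module.finrank ℝ ↥X ≤ Module.finrank ℝ ↥(X ⊓ LinearMap.ker φ) + Module.finrank ℝ W := by
  have h1 := LinearMap.finrank_range_add_finrank_ker (φ.domRestrict X)
  have h2 : Module.finrank ℝ ↥(LinearMap.range (φ.domRestrict X)) ≤ Module.finrank ℝ W :=
    Submodule.finrank_le _
  have h3 : LinearMap.ker (φ.domRestrict X) = Submodule.comap X.subtype (LinearMap.ker φ) :=
    LinearMap.ker_domRestrict X φ
  have h4 : Submodule.map X.subtype (Submodule.comap X.subtype (LinearMap.ker φ))
      = X ⊓ LinearMap.ker φ := Submodule.map_comap_subtype X _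
  have h5 : Module.finrank ℝ ↥(Submodule.comap X.subtype (LinearMap.ker φ))
      = Module.finrank ℝ ↥(X ⊓ LinearMap.ker φ) := by
    rw [← h4]
    exact (Submodule.equivMapOfInjective X.subtype (Submodule.injective_subtype X)
      _).finrank_eq
  rw [h3, h5] at h1
  omega

noncomputable def phiConst (v₀ : Fin n) (s : Finset (Fin n)) :
    (Fin n → ℝ) →ₗ[ℝ] (↥s → ℝ) :=
  LinearMap.pi fun v => (LinearMap.proj (v : Fin n) : (Fin n → ℝ) →ₗ[ℝ] ℝ)
    - LinearMap.proj v₀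

lemma mem_ker_phiConst {v₀ : Fin n} {s : Finset (Fin n)} {x : Fin n → ℝ}
    (h : x ∈ LinearMap.ker (phiConst v₀ s)) : ∀ v ∈ s, x v = x v₀ := by
  intro v hv
  have h2 := congrFun (LinearMap.mem_ker.mp h) ⟨v, hv⟩
  simp only [phiConst, LinearMap.pi_apply, LinearMap.sub_apply, LinearMap.proj_apply,
    Pi.zero_apply] at h2
  linarith

noncomputable def phiSum (s : Finset (Fin n)) : (Fin n → ℝ) →ₗ[ℝ] ℝ :=
  ∑ v ∈ s, LinearMap.proj v

lemma mem_ker_phiSum {s : Finset (Fin n)} {x : Fin n → ℝ}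
    (h : x ∈ LinearMap.ker (phiSum s)) : ∑ v ∈ s, x v = 0 := by
  have h2 := LinearMap.mem_ker.mp h
  simp only [phiSum, LinearMap.sum_apply, LinearMap.proj_apply] at h2
  exact h2

theorem stmt16 (n k : ℕ) (hk : 2 ≤ k) (E : Finset (Finset (Fin n)))
    (hunif : ∀ f ∈ E, f.card = k) (e : Finset (Fin n)) (he : e ∈ E)
    (i : ℕ) (h1 : 1 ≤ i) (h2 : i ≤ n) :
    lamConv k (normLap E) ((i : ℤ) + (k : ℤ) - 1) ≤ lamConv k (normLap (E.erase e)) (i : ℤ) ∧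
    lamConv k (normLap (E.erase e)) (i : ℤ) ≤ lamConv k (normLap E) ((i : ℤ) - (k : ℤ) + 1) := by
  classical
  have hkR : (2:ℝ) ≤ (k:ℝ) := by exact_mod_cast hk
  have hkm1 : (0:ℝ) < (k:ℝ) - 1 := by linarith
  have hek : e.card = k := hunif e he
  have hkn : k ≤ n := by
    have h := Finset.card_le_univ e
    rw [hek] at h
    simpa using h
  have hunif' : ∀ f ∈ E.erase e, f.card = k := fun f hf => hunif f (Finset.mem_of_mem_erase hf)
  have hN := isHermitian_normLap E
  have hN' := isHermitian_normLap (E.erase e)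
  have hbE : ∀ j, 0 ≤ eigsAsc (normLap E) j ∧ eigsAsc (normLap E) j ≤ (k:ℝ)/((k:ℝ)-1) :=
    fun j => eigsAsc_bounds hN
      (fun y => by rw [zero_mul]; exact quad_normLap_nonneg E hk hunif y)
      (fun y => quad_normLap_le E hk hunif y) j
  have hbE' : ∀ j, 0 ≤ eigsAsc (normLap (E.erase e)) j ∧
      eigsAsc (normLap (E.erase e)) j ≤ (k:ℝ)/((k:ℝ)-1) :=
    fun j => eigsAsc_bounds hN'
      (fun y => by rw [zero_mul]; exact quad_normLap_nonneg _ hk hunif' y)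
      (fun y => quad_normLap_le _ hk hunif' y) j
  have hconv : ∀ (M : Matrix (Fin n) (Fin n) ℝ) (j : ℕ) (hj1 : 1 ≤ j) (hj : j ≤ n),
      lamConv k M (j:ℤ) = eigsAsc M ⟨n - j, by omega⟩ := by
    intro M j hj1 hj2
    unfold lamConv
    rw [dif_neg (by omega), dif_pos (by exact_mod_cast hj2)]
    congr 1
  have hdeg0 : ∀ v, hdeg E v = 0 → hdeg (E.erase e) v = 0 := by
    intro v hv
    have := hdeg_erase_le E e v
    omega
  constructor
  · -- direction (1) : lam_{i+k-1}(E) ≤ lam_i(E')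
    have hcastj1 : (i:ℤ) + (k:ℤ) - 1 = (((i + k - 1 : ℕ)) : ℤ) := by push_cast; omega
    rw [hcastj1, hconv (normLap (E.erase e)) i h1 h2]
    set j1 := i + k - 1 with hj1_def
    by_cases hj1n : j1 ≤ n
    · rw [hconv (normLap E) j1 (by omega) hj1n]
      set cN := eigsAsc (normLap E) ⟨n - j1, by omega⟩ with hcN
      by_cases hcpos : 0 < cN
      · obtain ⟨U, hUrank, hUquad⟩ := span_top hN j1 (by omega) hj1n
        have hUquad' : ∀ y ∈ U, cN * (y ⬝ᵥ y) ≤ y ⬝ᵥ normLap E *ᵥ y := hUquad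
        set Tm := (dmh E).mulVecLin with hTm
        set X := U.map Tm with hX
        have hXrank : Module.finrank ℝ ↥X = j1 := by
          rw [hX, finrank_map_of_inj _ _ ?_, hUrank]
          intro y hy hTy
          by_contra hy0
          have hq := hUquad' y hy
          have hzero : y ⬝ᵥ normLap E *ᵥ y = 0 := by
            rw [quad_normLap, show dmh E *ᵥ y = 0 from hTy]
            simp
          have hyy := dot_self_pos hy0
          nlinarith
        obtain ⟨v₀, hv₀⟩ := Finset.card_pos.mp (show 0 < e.card by omega)
        set X0 := X ⊓ LinearMap.ker (phiConst v₀ (e.erase v₀)) with hX0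
        have hX0rank : i ≤ Module.finrank ℝ ↥X0 := by
          have hik := finrank_inf_ker X (phiConst v₀ (e.erase v₀))
          have hcod : Module.finrank ℝ (↥(e.erase v₀) → ℝ) = k - 1 := by
            rw [Module.finrank_pi, Fintype.card_coe, Finset.card_erase_of_mem hv₀, hek]
          rw [hXrank, hcod] at hik
          rw [hX0]
          omega
        have hsum_e : ∀ x : Fin n → ℝ, (∀ v ∈ e, x v = x v₀) →
            (∑ v ∈ e, x v ^ 2 = (k:ℝ) * x v₀ ^ 2) ∧ (∑ v ∈ e, x v = (k:ℝ) * x v₀) := by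
          intro x hconst
          constructor
          · rw [Finset.sum_congr rfl (fun v hv => by rw [hconst v hv]),
              Finset.sum_const, hek, nsmul_eq_mul]
          · rw [Finset.sum_congr rfl (fun v hv => hconst v hv),
              Finset.sum_const, hek, nsmul_eq_mul]
        have hquad_eq : ∀ x : Fin n → ℝ, (∀ v ∈ e, x v = x v₀) →
            x ⬝ᵥ lapMat E *ᵥ x = x ⬝ᵥ lapMat (E.erase e) *ᵥ x := by
          intro x hconst
          rw [quad_lap E hk hunif, quad_lap _ hk hunif',
            S2_erase E he, S1_erase E he, (hsum_e x hconst).1, (hsum_e x hconst).2]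
          field_simp
          ring
        have hX0fact : ∀ x ∈ X0, (∀ v ∈ e, x v = x v₀) ∧ ∃ y ∈ U, dmh E *ᵥ y = x := by
          intro x hx
          obtain ⟨hxX, hxK⟩ := Submodule.mem_inf.mp hx
          refine ⟨fun v hv => ?_, ?_⟩
          · by_cases hvv : v = v₀
            · rw [hvv]
            · exact mem_ker_phiConst hxK v (Finset.mem_erase.mpr ⟨hvv, hv⟩)
          · obtain ⟨y, hyU, hTy⟩ := Submodule.mem_map.mp hxX
            exact ⟨y, hyU, hTy⟩
        set Th' := (dph (E.erase e)).mulVecLin with hTh'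
        have hinj' : ∀ x ∈ X0, Th' x = 0 → x = 0 := by
          intro x hx hTx
          by_contra hx0
          obtain ⟨hconst, y, hyU, hyx⟩ := hX0fact x hx
          have hy0 : y ≠ 0 := by
            rintro rfl
            apply hx0
            rw [← hyx, Matrix.mulVec_zero]
          have hq := hUquad' y hyU
          have hqx : x ⬝ᵥ lapMat E *ᵥ x = y ⬝ᵥ normLap E *ᵥ y := by
            rw [quad_normLap, hyx]
          have hvan : ∀ v, hdeg (E.erase e) v ≠ 0 → x v = 0 := by
            intro v hv
            have h3 := congrFun hTx v
            simp only [hTh', Matrix.mulVecLin_apply, dph, Matrix.mulVec_diagonal,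
              Pi.zero_apply] at h3
            have hpos : (0:ℝ) < (hdeg (E.erase e) v : ℝ) := by
              exact_mod_cast Nat.pos_of_ne_zero hv
            have hpow : ((hdeg (E.erase e) v : ℝ)) ^ ((1/2):ℝ) ≠ 0 :=
              ne_of_gt (Real.rpow_pos_of_pos hpos _)
            exact (mul_eq_zero.mp h3).resolve_left hpow
          have hS2' : S2 (E.erase e) x = 0 :=
            Finset.sum_eq_zero fun f hf => Finset.sum_eq_zero fun v hv => by
              rw [hvan v (hdeg_ne_zero _ hf hv)]
              ring
          have hS1' : S1 (E.erase e) x = 0 :=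
            Finset.sum_eq_zero fun f hf => by
              rw [Finset.sum_eq_zero fun v hv => hvan v (hdeg_ne_zero _ hf hv)]
              ring
          have hqx0 : x ⬝ᵥ lapMat E *ᵥ x = 0 := by
            rw [hquad_eq x hconst, quad_lap _ hk hunif', hS2', hS1']
            ring
          have hyy := dot_self_pos hy0
          nlinarith
        set V' := X0.map Th' with hV'
        have hV'rank : i ≤ Module.finrank ℝ ↥V' := by
          rw [hV', finrank_map_of_inj _ _ hinj']
          exact hX0rank
        have hfinal : ∀ z ∈ V', cN * (z ⬝ᵥ z) ≤ z ⬝ᵥ normLap (E.erase e) *ᵥ z := by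
          intro z hz
          obtain ⟨x, hxX0, hxz⟩ := Submodule.mem_map.mp hz
          obtain ⟨hconst, y, hyU, hyx⟩ := hX0fact x hxX0
          have hq := hUquad' y hyU
          have hcong : ∀ v, hdeg (E.erase e) v ≠ 0 →
              (dmh (E.erase e) *ᵥ (dph (E.erase e) *ᵥ x)) v = x v := by
            intro v hv
            rw [dmh_dph_apply, if_neg hv]
          have hzq : z ⬝ᵥ normLap (E.erase e) *ᵥ z = x ⬝ᵥ lapMat (E.erase e) *ᵥ x := by
            rw [quad_normLap, ← hxz,
              show Th' x = dph (E.erase e) *ᵥ x from rfl,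
              quad_lap _ hk hunif', quad_lap _ hk hunif',
              S2_congr (E.erase e) hcong, S1_congr (E.erase e) hcong]
          have hzz : z ⬝ᵥ z = S2 (E.erase e) x := by
            rw [← hxz, show Th' x = dph (E.erase e) *ᵥ x from rfl, dph_dot_self,
              quad_diag_deg]
          have hqx : x ⬝ᵥ lapMat E *ᵥ x = y ⬝ᵥ normLap E *ᵥ y := by
            rw [quad_normLap, hyx]
          have hd1 : S2 E x ≤ y ⬝ᵥ y := by
            rw [← quad_diag_deg, ← hyx]
            exact dmh_deg_le E y
          have hd2 : S2 (E.erase e) x ≤ S2 E x := by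
            rw [S2_erase E he x]
            have : (0:ℝ) ≤ ∑ v ∈ e, x v ^ 2 :=
              Finset.sum_nonneg fun v _ => sq_nonneg _
            linarith
          rw [hzq, hzz, ← hquad_eq x hconst, hqx]
          calc cN * S2 (E.erase e) x ≤ cN * (y ⬝ᵥ y) := by
                apply mul_le_mul_of_nonneg_left _ hcpos.le
                linarith
            _ ≤ y ⬝ᵥ normLap E *ᵥ y := hq
        exact cf_low hN' i h1 h2 V' hV'rank hfinal
      · have h0 := (hbE' ⟨n - i, by omega⟩).1
        have := le_of_not_gt hcpos
        linarith
    · have hLHS : lamConv k (normLap E) ((j1:ℕ):ℤ) = 0 := by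
        unfold lamConv
        rw [dif_neg (by omega), dif_neg (by exact_mod_cast (by omega : ¬ ((j1:ℤ) ≤ (n:ℤ))))]
      rw [hLHS]
      exact (hbE' ⟨n - i, by omega⟩).1
  · -- direction (2) : lam_i(E') ≤ lam_{i-k+1}(E)
    rw [hconv (normLap (E.erase e)) i h1 h2]
    set cN' := eigsAsc (normLap (E.erase e)) ⟨n - i, by omega⟩ with hcN'
    by_cases hj2 : (i:ℤ) - (k:ℤ) + 1 < 1
    · unfold lamConv
      rw [dif_pos hj2]
      exact (hbE' ⟨n - i, by omega⟩).2
    · have hik : k ≤ i := by omega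
      set j2 := i + 1 - k with hj2_def
      have hcast : (i:ℤ) - (k:ℤ) + 1 = ((j2:ℕ):ℤ) := by push_cast; omega
      rw [hcast, hconv (normLap E) j2 (by omega) (by omega)]
      by_cases hcpos : 0 < cN'
      · obtain ⟨U, hUrank, hUquad⟩ := span_top hN' i h1 h2
        have hUquad' : ∀ z ∈ U, cN' * (z ⬝ᵥ z) ≤ z ⬝ᵥ normLap (E.erase e) *ᵥ z := hUquad
        set Tm' := (dmh (E.erase e)).mulVecLin with hTm'
        set X := U.map Tm' with hX
        have hXrank : Module.finrank ℝ ↥X = i := by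
          rw [hX, finrank_map_of_inj _ _ ?_, hUrank]
          intro z hz hTz
          by_contra hz0
          have hq := hUquad' z hz
          have hzero : z ⬝ᵥ normLap (E.erase e) *ᵥ z = 0 := by
            rw [quad_normLap, show dmh (E.erase e) *ᵥ z = 0 from hTz]
            simp
          have hzz := dot_self_pos hz0
          nlinarith
        set X0 := X ⊓ LinearMap.ker (phiSum e) with hX0
        have hX0rank : i - 1 ≤ Module.finrank ℝ ↥X0 := by
          have hik2 := finrank_inf_ker X (phiSum e)
          rw [hXrank, Module.finrank_self ℝ] at hik2
          rw [hX0]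
          omega
        have hX0fact : ∀ x ∈ X0, (∑ v ∈ e, x v = 0) ∧ ∃ z ∈ U, dmh (E.erase e) *ᵥ z = x := by
          intro x hx
          obtain ⟨hxX, hxK⟩ := Submodule.mem_inf.mp hx
          refine ⟨mem_ker_phiSum hxK, ?_⟩
          obtain ⟨z, hzU, hTz⟩ := Submodule.mem_map.mp hxX
          exact ⟨z, hzU, hTz⟩
        set Th := (dph E).mulVecLin with hTh
        have hinj : ∀ x ∈ X0, Th x = 0 → x = 0 := by
          intro x hx hTx
          obtain ⟨hsum0, z, hzU, hzx⟩ := hX0fact x hx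
          funext v
          show x v = 0
          by_cases hv : hdeg E v = 0
          · rw [← hzx]
            have hv' : hdeg (E.erase e) v = 0 := hdeg0 v hv
            simp [dmh, Matrix.mulVec_diagonal, hv', Real.zero_rpow (by norm_num : -(1/2:ℝ) ≠ 0)]
          · have h3 := congrFun hTx v
            simp only [hTh, Matrix.mulVecLin_apply, dph, Matrix.mulVec_diagonal,
              Pi.zero_apply] at h3
            have hpos : (0:ℝ) < (hdeg E v : ℝ) := by
              exact_mod_cast Nat.pos_of_ne_zero hv
            have hpow : ((hdeg E v : ℝ)) ^ ((1/2):ℝ) ≠ 0 :=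
              ne_of_gt (Real.rpow_pos_of_pos hpos _)
            exact (mul_eq_zero.mp h3).resolve_left hpow
        set V := X0.map Th with hV
        have hVrank : i - 1 ≤ Module.finrank ℝ ↥V := by
          rw [hV, finrank_map_of_inj _ _ hinj]
          exact hX0rank
        have hfinal : ∀ w ∈ V, cN' * (w ⬝ᵥ w) ≤ w ⬝ᵥ normLap E *ᵥ w := by
          intro w hw
          obtain ⟨x, hxX0, hxw⟩ := Submodule.mem_map.mp hw
          obtain ⟨hsum0, z, hzU, hzx⟩ := hX0fact x hxX0
          have hq := hUquad' z hzU
          have hcong : ∀ v, hdeg E v ≠ 0 → (dmh E *ᵥ (dph E *ᵥ x)) v = x v := by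
            intro v hv
            rw [dmh_dph_apply, if_neg hv]
          have hwq : w ⬝ᵥ normLap E *ᵥ w = x ⬝ᵥ lapMat E *ᵥ x := by
            rw [quad_normLap, ← hxw, show Th x = dph E *ᵥ x from rfl,
              quad_lap _ hk hunif, quad_lap _ hk hunif,
              S2_congr E hcong, S1_congr E hcong]
          have hww : w ⬝ᵥ w = S2 E x := by
            rw [← hxw, show Th x = dph E *ᵥ x from rfl, dph_dot_self, quad_diag_deg]
          have hzq : x ⬝ᵥ lapMat (E.erase e) *ᵥ x = z ⬝ᵥ normLap (E.erase e) *ᵥ z := by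
            rw [quad_normLap, hzx]
          have hd1 : S2 (E.erase e) x ≤ z ⬝ᵥ z := by
            rw [← quad_diag_deg, ← hzx]
            exact dmh_deg_le (E.erase e) z
          -- decompositions
          have hS1dec : S1 E x = S1 (E.erase e) x := by
            rw [S1_erase E he x, hsum0]
            ring
          have ht0 : (0:ℝ) ≤ ∑ v ∈ e, x v ^ 2 :=
            Finset.sum_nonneg fun v _ => sq_nonneg _
          have hS2dec : S2 E x = S2 (E.erase e) x + ∑ v ∈ e, x v ^ 2 := S2_erase E he x
          have hρ : cN' ≤ (k:ℝ)/((k:ℝ)-1) := (hbE' ⟨n - i, by omega⟩).2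
          have hρ' : (k:ℝ)/((k:ℝ)-1) = 1 + ((k:ℝ)-1)⁻¹ := by
            field_simp
            ring
          have hq' : cN' * S2 (E.erase e) x ≤ x ⬝ᵥ lapMat (E.erase e) *ᵥ x := by
            rw [hzq]
            calc cN' * S2 (E.erase e) x ≤ cN' * (z ⬝ᵥ z) :=
                  mul_le_mul_of_nonneg_left hd1 hcpos.le
              _ ≤ z ⬝ᵥ normLap (E.erase e) *ᵥ z := hq
          have hlapdec : x ⬝ᵥ lapMat E *ᵥ x = x ⬝ᵥ lapMat (E.erase e) *ᵥ x
              + (1 + ((k:ℝ)-1)⁻¹) * ∑ v ∈ e, x v ^ 2 := by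
            rw [quad_lap _ hk hunif, quad_lap _ hk hunif', hS1dec, hS2dec]
            ring
          have htmul : cN' * (∑ v ∈ e, x v ^ 2) ≤ (1 + ((k:ℝ)-1)⁻¹) * ∑ v ∈ e, x v ^ 2 := by
            apply mul_le_mul_of_nonneg_right _ ht0
            rw [← hρ']
            exact hρ
          rw [hwq, hww, hS2dec]
          nlinarith
        have hcf := cf_low hN (i-1) (by omega) (by omega) V hVrank hfinal
        refine le_trans hcf (eigsAsc_mono hN (Fin.mk_le_mk.mpr (by omega)))
      · have h0 := (hbE ⟨n - j2, by omega⟩).1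
        have := le_of_not_gt hcpos
        linarith
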